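/- If the Taylor coefficients c_k of an analytic function f on {|z| < R} (R > 1) satisfy the Cauchy bounds, and α_n = ∫ conj(Φ_n(e^{iθ})) g(e^{iθ}) dμ(θ) where g has an analytic extension to {|z| < R} and Φ_n is orthogonal to all e^{ijθ} with j < n in L²(dμ), then |α_n| ≤ ‖Φ_n‖_{L²(dμ)} · Σ_{k ≥ n} |ĝ(k)| where ĝ(k) are the Taylor coefficients of g; in particular limsup |α_n|^{1/n} ≤ 1/R. -/

import Mathlib

open Complex MeasureTheory Filter
open Topology
set_option maxHeartbeats 1000000

/-- If Φ_n is orthogonal in L²(dμ) to e^{ijθ} for j < n, with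
‖Φ_n‖_{L²(dμ)} ≤ 1, and g(z) = Σ gc(k) z^k is analytic on {|z| < R} (R > 1), then
α_n = ∫ conj(Φ_n(e^{iθ})) g(e^{iθ}) dμ satisfies
|α_n| ≤ ‖Φ_n‖_{L²(dμ)} Σ_{k≥n} |gc(k)|; in particular limsup |α_n|^{1/n} ≤ 1/R. -/
theorem taylor_tail_bound_verblunsky
    (R : ℝ) (hR : 1 < R)
    (μ : Measure ℝ) [IsProbabilityMeasure μ]
    (Φ : ℕ → ℂ → ℂ)
    (hmeas : ∀ n, Measurable fun θ : ℝ => Φ n (Complex.exp (θ * Complex.I)))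
    (hL2 : ∀ n, MemLp (fun θ : ℝ => Φ n (Complex.exp (θ * Complex.I))) 2 μ)
    (horth : ∀ n : ℕ, ∀ k : ℕ, k < n →
      ∫ θ : ℝ, (starRingEnd ℂ) (Φ n (Complex.exp (θ * Complex.I))) *
        Complex.exp (θ * Complex.I) ^ k ∂μ = 0)
    (hnorm : ∀ n : ℕ, ∫ θ : ℝ, ‖Φ n (Complex.exp (θ * Complex.I))‖ ^ 2 ∂μ ≤ 1)
    (gc : ℕ → ℂ)
    (hsum : Summable fun k => ‖gc k‖)
    (hrad : ∀ r : ℝ, 0 ≤ r → r < R → Summable fun k => ‖gc k‖ * r ^ k)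
    (g : ℂ → ℂ)
    (hg : ∀ θ : ℝ, HasSum (fun k : ℕ => gc k * Complex.exp (θ * Complex.I) ^ k)
      (g (Complex.exp (θ * Complex.I))))
    (hgint : ∀ n, Integrable (fun θ : ℝ =>
      (starRingEnd ℂ) (Φ n (Complex.exp (θ * Complex.I))) *
        g (Complex.exp (θ * Complex.I))) μ)
    (α : ℕ → ℂ)
    (hα : ∀ n : ℕ, α n = ∫ θ : ℝ,
      (starRingEnd ℂ) (Φ n (Complex.exp (θ * Complex.I))) *
        g (Complex.exp (θ * Complex.I)) ∂μ) :
    (∀ n : ℕ, ‖α n‖ ≤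
      Real.sqrt (∫ θ : ℝ, ‖Φ n (Complex.exp (θ * Complex.I))‖ ^ 2 ∂μ) *
        ∑' k : ℕ, ‖gc (n + k)‖) ∧
    Filter.limsup (fun n : ℕ => ‖α n‖ ^ ((n : ℝ)⁻¹)) atTop ≤ R⁻¹ := by
  have hnorme : ∀ θ : ℝ, ‖Complex.exp ((θ : ℂ) * Complex.I)‖ = 1 := fun θ => by
    simp [Complex.norm_exp_ofReal_mul_I θ]
  have hswap : ∀ n : ℕ, (∑' k : ℕ, ‖gc (n + k)‖) = ∑' k : ℕ, ‖gc (k + n)‖ :=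
    fun n => tsum_congr fun k => by rw [Nat.add_comm]
  have hsumtail : ∀ n : ℕ, Summable fun k : ℕ => ‖gc (k + n)‖ :=
    fun n => (summable_nat_add_iff n).2 hsum
  -- Part 1
  have key : ∀ n : ℕ, ‖α n‖ ≤
      Real.sqrt (∫ θ : ℝ, ‖Φ n (Complex.exp (θ * Complex.I))‖ ^ 2 ∂μ) *
        ∑' k : ℕ, ‖gc (n + k)‖ := by
    intro n
    set φ : ℝ → ℂ := fun θ : ℝ => Φ n (Complex.exp (θ * Complex.I)) with hφdef
    set S : ℝ := Real.sqrt (∫ θ : ℝ, ‖φ θ‖ ^ 2 ∂μ) with hSdef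
    have hS0 : 0 ≤ S := Real.sqrt_nonneg _
    have hφint : Integrable φ μ := (hL2 n).integrable (by norm_num)
    -- L¹ norm ≤ L² norm on probability measure
    have hI1S : ∫ θ, ‖φ θ‖ ∂μ ≤ S := by
      have hm2 : MemLp (fun θ => ‖φ θ‖) 2 μ := (hL2 n).norm
      have hv := ProbabilityTheory.variance_nonneg (fun θ => ‖φ θ‖) μ
      rw [ProbabilityTheory.variance_eq_sub hm2] at hv
      simp only [Pi.pow_apply] at hv
      calc ∫ θ, ‖φ θ‖ ∂μ = Real.sqrt ((∫ θ, ‖φ θ‖ ∂μ) ^ 2) :=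
            (Real.sqrt_sq (integral_nonneg fun _ => norm_nonneg _)).symm
        _ ≤ S := Real.sqrt_le_sqrt (by linarith)
    -- the inner products with e^{ikθ}
    set I : ℕ → ℂ := fun k => ∫ θ : ℝ,
      (starRingEnd ℂ) (φ θ) * Complex.exp ((θ : ℂ) * Complex.I) ^ k ∂μ with hIdef
    have hIk : ∀ k : ℕ, ‖I k‖ ≤ S := by
      intro k
      calc ‖I k‖ ≤ ∫ θ, ‖(starRingEnd ℂ) (φ θ) * Complex.exp ((θ : ℂ) * Complex.I) ^ k‖ ∂μ :=
            norm_integral_le_integral_norm _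
        _ = ∫ θ, ‖φ θ‖ ∂μ := by
            refine integral_congr_ae (Filter.Eventually.of_forall fun θ => ?_)
            simp [norm_mul, norm_pow, hnorme θ, RCLike.norm_conj]
        _ ≤ S := hI1S
    -- integrability of conj φ
    have hconjint : Integrable (fun θ => (starRingEnd ℂ) (φ θ)) μ := by
      refine hφint.mono ?_ (Filter.Eventually.of_forall fun θ => ?_)
      · exact RCLike.continuous_conj.comp_aestronglyMeasurable hφint.1
      · simp [RCLike.norm_conj]
    -- the terms
    set F : ℕ → ℝ → ℂ := fun k θ =>
      (starRingEnd ℂ) (φ θ) * (gc k * Complex.exp ((θ : ℂ) * Complex.I) ^ k) with hFdef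
    have hFint : ∀ k, Integrable (F k) μ := by
      intro k
      have h1 : Integrable (fun θ : ℝ =>
          (gc k * Complex.exp ((θ : ℂ) * Complex.I) ^ k) * (starRingEnd ℂ) (φ θ)) μ := by
        refine Integrable.bdd_mul (c := ‖gc k‖) hconjint ?_ (Filter.Eventually.of_forall fun θ => ?_)
        · exact (continuous_const.mul
            ((Complex.continuous_ofReal.mul continuous_const).cexp.pow k)).aestronglyMeasurable
        · simp [norm_mul, norm_pow, hnorme θ]
      exact h1.congr (Filter.Eventually.of_forall fun θ => by simp only [hFdef]; ring)
    have hFnorm : ∀ k, (∫ θ, ‖F k θ‖ ∂μ) = ‖gc k‖ * ∫ θ, ‖φ θ‖ ∂μ := by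
      intro k
      rw [← integral_const_mul]
      refine integral_congr_ae (Filter.Eventually.of_forall fun θ => ?_)
      simp only [hFdef]
      simp [norm_mul, norm_pow, hnorme θ, RCLike.norm_conj]
      ring
    have hFsumnorm : Summable fun k => ∫ θ, ‖F k θ‖ ∂μ := by
      simp only [hFnorm]
      exact hsum.mul_right _
    have hhs : HasSum (fun k => ∫ θ, F k θ ∂μ) (α n) := by
      have h1 := MeasureTheory.hasSum_integral_of_summable_integral_norm hFint hFsumnorm
      have h2 : (∫ θ, (∑' k, F k θ) ∂μ) = α n := by
        rw [hα n]
        refine integral_congr_ae (Filter.Eventually.of_forall fun θ => ?_)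
        exact ((hg θ).mul_left ((starRingEnd ℂ) (φ θ))).tsum_eq
      rwa [h2] at h1
    have hint_eq : ∀ k, (∫ θ, F k θ ∂μ) = gc k * I k := by
      intro k
      rw [hIdef, ← integral_const_mul]
      refine integral_congr_ae (Filter.Eventually.of_forall fun θ => ?_)
      simp only [hFdef]; ring
    simp only [hint_eq] at hhs
    -- summability of the norms
    have hsummable : Summable fun k => ‖gc k * I k‖ := by
      refine Summable.of_nonneg_of_le (fun k => norm_nonneg _) (fun k => ?_) (hsum.mul_right S)
      rw [norm_mul]
      exact mul_le_mul_of_nonneg_left (hIk k) (norm_nonneg _)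
    have h3 : ‖α n‖ ≤ ∑' k, ‖gc k * I k‖ := by
      rw [← hhs.tsum_eq]
      exact norm_tsum_le_tsum_norm hsummable
    have h4 : (∑' k, ‖gc k * I k‖) = ∑' k, ‖gc (k + n) * I (k + n)‖ := by
      rw [← Summable.sum_add_tsum_nat_add n hsummable]
      have : ∀ i ∈ Finset.range n, ‖gc i * I i‖ = 0 := by
        intro i hi
        rw [Finset.mem_range] at hi
        have : I i = 0 := horth n i hi
        simp [this]
      rw [Finset.sum_eq_zero this, zero_add]
    have h5 : (∑' k, ‖gc (k + n) * I (k + n)‖) ≤ S * ∑' k : ℕ, ‖gc (n + k)‖ := by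
      rw [hswap n, ← tsum_mul_left]
      refine Summable.tsum_le_tsum (fun k => ?_) ((summable_nat_add_iff n).2 hsummable)
        ((hsumtail n).mul_left S)
      rw [norm_mul, mul_comm]
      exact mul_le_mul_of_nonneg_right (hIk _) (norm_nonneg _)
    calc ‖α n‖ ≤ ∑' k, ‖gc k * I k‖ := h3
      _ = _ := h4
      _ ≤ _ := h5
  refine ⟨key, ?_⟩
  -- uniform bound for part 2
  have hαbound : ∀ r : ℝ, 1 < r → r < R → ∀ n : ℕ,
      ‖α n‖ ≤ (max (∑' k : ℕ, ‖gc k‖ * r ^ k) 1) * (r⁻¹) ^ n := by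
    intro r hr1 hrR n
    have hr0 : (0 : ℝ) < r := by linarith
    set C : ℝ := ∑' k : ℕ, ‖gc k‖ * r ^ k with hCdef
    have hradsum : Summable fun k => ‖gc k‖ * r ^ k := hrad r hr0.le hrR
    have hS1 : Real.sqrt (∫ θ : ℝ, ‖Φ n (Complex.exp (θ * Complex.I))‖ ^ 2 ∂μ) ≤ 1 := by
      calc Real.sqrt _ ≤ Real.sqrt 1 := Real.sqrt_le_sqrt (hnorm n)
        _ = 1 := Real.sqrt_one
    have hT0 : (0 : ℝ) ≤ ∑' k : ℕ, ‖gc (n + k)‖ := tsum_nonneg fun k => norm_nonneg _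
    have h1 : ‖α n‖ ≤ ∑' k : ℕ, ‖gc (n + k)‖ := by
      calc ‖α n‖ ≤ _ := key n
        _ ≤ 1 * ∑' k : ℕ, ‖gc (n + k)‖ := mul_le_mul_of_nonneg_right hS1 hT0
        _ = _ := one_mul _
    have h2 : (∑' k : ℕ, ‖gc (n + k)‖) ≤ (r⁻¹) ^ n * ∑' k : ℕ, ‖gc (k + n)‖ * r ^ (k + n) := by
      rw [hswap n, ← tsum_mul_left]
      refine Summable.tsum_le_tsum (fun k => ?_) (hsumtail n)
        (((summable_nat_add_iff n).2 hradsum).mul_left _)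
      have heq : (r⁻¹) ^ n * (‖gc (k + n)‖ * r ^ (k + n)) = ‖gc (k + n)‖ * r ^ k := by
        rw [pow_add]
        field_simp
        rw [one_div, mul_right_comm, ← mul_pow, inv_mul_cancel₀ hr0.ne', one_pow, one_mul]
      rw [heq]
      exact le_mul_of_one_le_right (norm_nonneg _) (one_le_pow₀ hr1.le)
    have h3 : (∑' k : ℕ, ‖gc (k + n)‖ * r ^ (k + n)) ≤ C := by
      rw [hCdef, ← Summable.sum_add_tsum_nat_add n hradsum]
      have : (0:ℝ) ≤ ∑ i ∈ Finset.range n, ‖gc i‖ * r ^ i :=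
        Finset.sum_nonneg fun i _ => mul_nonneg (norm_nonneg _) (by positivity)
      linarith
    have hrn : (0:ℝ) ≤ (r⁻¹) ^ n := by positivity
    calc ‖α n‖ ≤ ∑' k : ℕ, ‖gc (n + k)‖ := h1
      _ ≤ (r⁻¹) ^ n * ∑' k : ℕ, ‖gc (k + n)‖ * r ^ (k + n) := h2
      _ ≤ (r⁻¹) ^ n * C := mul_le_mul_of_nonneg_left h3 hrn
      _ ≤ (r⁻¹) ^ n * max C 1 := mul_le_mul_of_nonneg_left (le_max_left _ _) hrn
      _ = max C 1 * (r⁻¹) ^ n := mul_comm _ _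
  -- limsup part
  by_contra hcon
  push_neg at hcon
  set L : ℝ := Filter.limsup (fun n : ℕ => ‖α n‖ ^ ((n : ℝ)⁻¹)) atTop with hLdef
  have hR0 : (0:ℝ) < R := by linarith
  have hRinv : (0:ℝ) < R⁻¹ := by positivity
  have hL0 : (0:ℝ) < L := lt_trans hRinv hcon
  have hLinvR : L⁻¹ < R := by
    calc L⁻¹ < (R⁻¹)⁻¹ := by gcongr
      _ = R := inv_inv R
  set r : ℝ := (max 1 L⁻¹ + R) / 2 with hrdef
  have hm1 : (1:ℝ) ≤ max 1 L⁻¹ := le_max_left _ _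
  have hmR : max 1 L⁻¹ < R := max_lt hR hLinvR
  have hr1 : 1 < r := by rw [hrdef]; linarith
  have hrR : r < R := by rw [hrdef]; linarith
  have hr0 : (0:ℝ) < r := by linarith
  have hLinvr : L⁻¹ < r := by
    have : L⁻¹ ≤ max 1 L⁻¹ := le_max_right _ _
    rw [hrdef]; linarith
  have hrinvL : r⁻¹ < L := by
    calc r⁻¹ < (L⁻¹)⁻¹ := by gcongr
      _ = L := inv_inv L
  set L' : ℝ := (r⁻¹ + L) / 2 with hL'def
  have hrL' : r⁻¹ < L' := by rw [hL'def]; linarith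
  have hL'L : L' < L := by rw [hL'def]; linarith
  set C' : ℝ := max (∑' k : ℕ, ‖gc k‖ * r ^ k) 1 with hC'def
  have hC'pos : (0:ℝ) < C' := lt_of_lt_of_le one_pos (le_max_right _ _)
  -- tendsto
  have h0 : Tendsto (fun n : ℕ => ((n : ℝ)⁻¹)) atTop (𝓝 0) :=
    tendsto_inv_atTop_nhds_zero_nat
  have hcont : Continuous fun x : ℝ => C' ^ x := by
    have : (fun x : ℝ => C' ^ x) = fun x => Real.exp (Real.log C' * x) := by
      funext x; rw [Real.rpow_def_of_pos hC'pos]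
    rw [this]
    exact Real.continuous_exp.comp (continuous_const.mul continuous_id)
  have hG : Tendsto (fun n : ℕ => C' ^ ((n : ℝ)⁻¹)) atTop (𝓝 (C' ^ (0:ℝ))) :=
    (hcont.tendsto 0).comp h0
  simp only [Real.rpow_zero] at hG
  have hG' : Tendsto (fun n : ℕ => C' ^ ((n : ℝ)⁻¹) * r⁻¹) atTop (𝓝 (1 * r⁻¹)) :=
    hG.mul_const _
  rw [one_mul] at hG'
  have hev1 : ∀ᶠ n : ℕ in atTop, C' ^ ((n : ℝ)⁻¹) * r⁻¹ < L' :=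
    hG'.eventually_lt_const hrL'
  have hev2 : ∀ᶠ n : ℕ in atTop, ‖α n‖ ^ ((n : ℝ)⁻¹) ≤ C' ^ ((n : ℝ)⁻¹) * r⁻¹ := by
    filter_upwards [Filter.eventually_ge_atTop 1] with n hn
    have hne : ((n : ℝ)) ≠ 0 := Nat.cast_ne_zero.2 (by omega)
    have hb := hαbound r hr1 hrR n
    calc ‖α n‖ ^ ((n : ℝ)⁻¹) ≤ (C' * (r⁻¹) ^ n) ^ ((n : ℝ)⁻¹) :=
          Real.rpow_le_rpow (norm_nonneg _) hb (by positivity)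
      _ = C' ^ ((n : ℝ)⁻¹) * ((r⁻¹) ^ n) ^ ((n : ℝ)⁻¹) :=
          Real.mul_rpow hC'pos.le (by positivity)
      _ = C' ^ ((n : ℝ)⁻¹) * r⁻¹ := by
          rw [← Real.rpow_natCast r⁻¹ n, ← Real.rpow_mul (by positivity),
            mul_inv_cancel₀ hne, Real.rpow_one]
  have hcb : IsCoboundedUnder (· ≤ ·) atTop (fun n : ℕ => ‖α n‖ ^ ((n : ℝ)⁻¹)) :=
    isCoboundedUnder_le_of_le atTop (x := 0) fun n => by positivity
  have hfin : L ≤ L' := by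
    refine limsup_le_of_le hcb ?_
    filter_upwards [hev1, hev2] with n h1 h2
    linarith
  linarith
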